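/- Let κ be an ordinal, G = (V,E,L) a finitely-branching parity graph (every vertex has finitely many outgoing edges and at least one successor), and (S_k)_{k<κ} pairwise disjoint subsets of V. Define iteratively for k ≤ κ: V_k = V \ ∪_{j<k} A_j and A_k = attr(S_k, G|_{V_k}). Then attr(∪_{k<κ} S_k, G) = ⊔_{k<κ} A_k, and the A_k are pairwise disjoint. -/

import Mathlib

/-- A parity graph on vertex type `V`: a set of edges together with a priority labelling. -/
structure PGraph (V : Type) where
  E : Set (V × V)
  L : V × V → ℕ

namespace PGraph

variable {V : Type}

/-- An infinite path along an edge set. -/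
def IsPath (E : Set (V × V)) (ρ : ℕ → V) : Prop := ∀ n, (ρ n, ρ (n+1)) ∈ E

/-- Restriction of an edge set to a set of vertices. -/
def restr (E : Set (V × V)) (W : Set V) : Set (V × V) := E ∩ (W ×ˢ W)

/-- The attractor of a set `X` of edges: vertices of `W` from which every infinite path
in the graph restricted to `W` eventually uses an edge of `X`. -/
def attrE (E : Set (V × V)) (W : Set V) (X : Set (V × V)) : Set V :=
  {v ∈ W | ∀ ρ : ℕ → V, ρ 0 = v → IsPath (restr E W) ρ → ∃ n, (ρ n, ρ (n+1)) ∈ X}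

/-- The attractor of a set `S` of vertices: vertices of `W` from which every infinite path
in the graph restricted to `W` eventually visits `S` (note `S ∩ W ⊆ attrV E W S`). -/
def attrV (E : Set (V × V)) (W : Set V) (S : Set V) : Set V :=
  {v ∈ W | ∀ ρ : ℕ → V, ρ 0 = v → IsPath (restr E W) ρ → ∃ n, ρ n ∈ S}

/-- A sequence of priorities is parity accepting if its limsup is even. -/
def ParityAccepting (c : ℕ → ℕ) : Prop :=
  ∃ p, Even p ∧ (∃ᶠ n in Filter.atTop, c n = p) ∧ (∀ᶠ n in Filter.atTop, c n ≤ p)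

/-- A labelled graph is even if every infinite path is parity accepting. -/
def EvenG (E : Set (V × V)) (L : V × V → ℕ) : Prop :=
  ∀ ρ : ℕ → V, IsPath E ρ → ParityAccepting (fun n => L (ρ n, ρ (n+1)))

/-- The set of edges of priority `h` of the graph restricted to `W`. -/
def Hset (G : PGraph V) (W : Set V) (h : ℕ) : Set (V × V) :=
  {e | e ∈ restr G.E W ∧ G.L e = h}

end PGraph

lemma exists_max_of_finite {ι : Type} (lt : ι → ι → Prop) (hwo : IsWellOrder ι lt)
    {K : Set ι} (hfinK : K.Finite) (hne : K.Nonempty) :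
    ∃ m ∈ K, ∀ k ∈ K, ¬ lt m k := by
  haveI := hwo
  revert hne
  refine Set.Finite.induction_on
    (motive := fun K _ => K.Nonempty → ∃ m ∈ K, ∀ k ∈ K, ¬ lt m k) K hfinK
    (fun hne => absurd hne (by simp)) ?_
  intro a K ha hK ih hne
  rcases K.eq_empty_or_nonempty with rfl | hKne
  · refine ⟨a, by simp, ?_⟩
    intro k hk
    simp at hk
    subst hk
    exact irrefl_of lt k
  · obtain ⟨m, hmK, hm⟩ := ih hKne
    rcases trichotomous_of lt a m with h | h | h
    · refine ⟨m, Set.mem_insert_of_mem _ hmK, ?_⟩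
      intro k hk
      rcases hk with rfl | hk
      · exact asymm_of lt h
      · exact hm k hk
    · subst h
      refine ⟨a, Set.mem_insert _ _, ?_⟩
      intro k hk
      rcases hk with rfl | hk
      · exact irrefl_of lt k
      · exact hm k hk
    · refine ⟨a, Set.mem_insert _ _, ?_⟩
      intro k hk
      rcases hk with rfl | hk
      · exact irrefl_of lt k
      · intro hak
        exact hm k hk (trans_of lt h hak)

open PGraph in
/-- for a finitely-branching parity graph and pairwise disjoint sets
(S_k)_{k<κ} indexed by a well-order, defining A_k = attr(S_k, G|_{V \ union of earlier A's})
by transfinite recursion, the attractor of the union of the S_k is the disjoint union of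
the A_k. -/
theorem attr_disjoint_union {V : Type} [Countable V] (E : Set (V × V))
    (hsucc : ∀ v : V, ∃ w, (v, w) ∈ E)
    (hfin : ∀ v : V, {w | (v, w) ∈ E}.Finite)
    (ι : Type) (lt : ι → ι → Prop) (hwo : IsWellOrder ι lt)
    (S : ι → Set V) (hdisj : ∀ i j, i ≠ j → Disjoint (S i) (S j))
    (A : ι → Set V)
    (hA : ∀ k, A k = attrV E (Set.univ \ ⋃ j ∈ {j | lt j k}, A j) (S k)) :
    attrV E Set.univ (⋃ k, S k) = ⋃ k, A k ∧ (∀ i j, i ≠ j → Disjoint (A i) (A j)) := by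
  haveI := hwo
  set W : ι → Set V := fun k => Set.univ \ ⋃ j ∈ {j | lt j k}, A j with hW
  -- membership in W
  have hWmem : ∀ k v, v ∈ W k ↔ ∀ j, lt j k → v ∉ A j := by
    intro k v
    simp [hW, Set.mem_diff]
  have hAsubW : ∀ k, A k ⊆ W k := by
    intro k
    rw [hA k]
    exact Set.sep_subset _ _
  -- disjointness
  have hdisjA : ∀ i j, i ≠ j → Disjoint (A i) (A j) := by
    have base : ∀ i j, lt i j → Disjoint (A i) (A j) := by
      intro i j hij
      rw [Set.disjoint_left]
      intro x hxi hxj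
      exact ((hWmem j x).1 (hAsubW j hxj)) i hij hxi
    intro i j hij
    rcases trichotomous_of lt i j with h | h | h
    · exact base i j h
    · exact absurd h hij
    · exact (base j i h).symm
  -- S k ∩ W k ⊆ A k
  have hSA : ∀ k v, v ∈ S k → v ∈ W k → v ∈ A k := by
    intro k v hvS hvW
    rw [hA k]
    exact ⟨hvW, fun ρ h0 _ => ⟨0, h0 ▸ hvS⟩⟩
  refine ⟨Set.Subset.antisymm ?_ ?_, hdisjA⟩
  · -- attr ⊆ ⋃ A : König-style path construction
    intro v hv
    by_contra hvA
    -- every vertex outside ⋃ A has a successor outside ⋃ A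
    have step : ∀ w : V, w ∉ ⋃ k, A k → ∃ w', (w, w') ∈ E ∧ w' ∉ ⋃ k, A k := by
      intro w hw
      by_contra hcon
      push_neg at hcon
      -- all successors lie in ⋃ A
      have hall : ∀ w', (w, w') ∈ E → ∃ k, w' ∈ A k := by
        intro w' he
        simpa using hcon w' he
      set K : Set ι := {k | ∃ w', (w, w') ∈ E ∧ w' ∈ A k} with hK
      have hKne : K.Nonempty := by
        obtain ⟨w', hw'⟩ := hsucc w
        obtain ⟨k, hk⟩ := hall w' hw'
        exact ⟨k, w', hw', hk⟩
      have hKfin : K.Finite := by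
        have : K ⊆ ⋃ w' ∈ {w' | (w, w') ∈ E}, {k | w' ∈ A k} := by
          intro k hk
          obtain ⟨w', he, hA'⟩ := hk
          exact Set.mem_biUnion he hA'
        refine Set.Finite.subset (Set.Finite.biUnion (hfin w) ?_) this
        intro w' _
        refine Set.Subsingleton.finite ?_
        intro k1 h1 k2 h2
        by_contra hne
        exact Set.disjoint_left.1 (hdisjA k1 k2 hne) h1 h2
      obtain ⟨m, hmK, hmax⟩ := exists_max_of_finite lt hwo hKfin hKne
      -- show w ∈ A m, contradiction
      have hwW : w ∈ W m := (hWmem m w).2 (fun j _ hj =>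
        hw (Set.mem_iUnion.2 ⟨j, hj⟩))
      have : w ∈ A m := by
        rw [hA m]
        refine ⟨hwW, ?_⟩
        intro ρ h0 hρ
        have he1 := hρ 0
        obtain ⟨heE, _, h1W⟩ := he1
        rw [h0] at heE
        obtain ⟨k'', hk''⟩ := hall (ρ 1) heE
        have hk''K : k'' ∈ K := ⟨ρ 1, heE, hk''⟩
        have : k'' = m := by
          rcases trichotomous_of lt k'' m with h | h | h
          · exact absurd hk'' ((hWmem m (ρ 1)).1 h1W k'' h)
          · exact h
          · exact absurd h (hmax k'' hk''K)
        subst this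
        rw [hA k''] at hk''
        obtain ⟨n, hn⟩ := hk''.2 (fun t => ρ (1 + t)) rfl
          (fun t => by have h' := hρ (1 + t); rwa [show 1 + t + 1 = 1 + (t + 1) by omega] at h')
        exact ⟨1 + n, hn⟩
      exact hw (Set.mem_iUnion.2 ⟨m, this⟩)
    -- build the path
    let B := {w : V // w ∉ ⋃ k, A k}
    let g : B → B := fun b =>
      ⟨(step b.1 b.2).choose, (step b.1 b.2).choose_spec.2⟩
    have hg : ∀ b : B, (b.1, (g b).1) ∈ E := fun b => (step b.1 b.2).choose_spec.1
    let ρ : ℕ → V := fun n => (g^[n] ⟨v, hvA⟩).1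
    have hρE : IsPath (restr E Set.univ) ρ := by
      intro n
      refine ⟨?_, trivial, trivial⟩
      have : g^[n+1] (⟨v, hvA⟩ : B) = g (g^[n] ⟨v, hvA⟩) := Function.iterate_succ_apply' g n _
      show (ρ n, ρ (n+1)) ∈ E
      simp only [ρ, this]
      exact hg _
    obtain ⟨n, hn⟩ := hv.2 ρ rfl hρE
    obtain ⟨k, hk⟩ := Set.mem_iUnion.1 hn
    have hρB : ρ n ∉ ⋃ k, A k := (g^[n] (⟨v, hvA⟩ : B)).2
    have hρW : ρ n ∈ W k := (hWmem k (ρ n)).2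
      (fun j _ hj => hρB (Set.mem_iUnion.2 ⟨j, hj⟩))
    exact hρB (Set.mem_iUnion.2 ⟨k, hSA k (ρ n) hk hρW⟩)
  · -- ⋃ A ⊆ attr, by well-founded induction
    have key : ∀ k, ∀ v ∈ A k, ∀ ρ : ℕ → V, ρ 0 = v → IsPath (restr E Set.univ) ρ →
        ∃ n, ρ n ∈ ⋃ k, S k := by
      intro k
      induction k using (IsWellFounded.wf (r := lt)).induction with
      | _ k ih =>
        intro v hv ρ h0 hρ
        by_cases hstay : ∀ m, ρ m ∈ W k
        · have hpath : IsPath (restr E (W k)) ρ := fun n => ⟨(hρ n).1, hstay n, hstay (n+1)⟩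
          rw [hA k] at hv
          obtain ⟨n, hn⟩ := hv.2 ρ h0 hpath
          exact ⟨n, Set.mem_iUnion.2 ⟨k, hn⟩⟩
        · push_neg at hstay
          obtain ⟨m, hm⟩ := hstay
          have : ∃ j, lt j k ∧ ρ m ∈ A j := by
            by_contra h
            push_neg at h
            exact hm ((hWmem k (ρ m)).2 h)
          obtain ⟨j, hj, hmem⟩ := this
          obtain ⟨n, hn⟩ := ih j hj (ρ m) hmem (fun t => ρ (m + t)) rfl
            (fun t => by have h' := hρ (m + t); rwa [show m + t + 1 = m + (t + 1) by omega] at h')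
          exact ⟨m + n, hn⟩
    intro v hv
    obtain ⟨k, hk⟩ := Set.mem_iUnion.1 hv
    exact ⟨trivial, key k v hk⟩
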